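/- The regular spanners are closed under intersection: for all regular spanners P1 and P2, the spanner P1 ∩ P2 defined by (P1 ∩ P2)(d) = P1(d) ∩ P2(d) for every document d is a regular spanner. -/

import Mathlib

namespace DocSpanners

/-- A span: a pair of endpoint positions `[i, j⟩`. -/
abbrev Span : Type := ℕ × ℕ

/-- `s` is a span of document `d`. -/
def IsSpanOf {α : Type} (d : List α) (s : Span) : Prop :=
  s.1 ≤ s.2 ∧ s.2 ≤ d.length

/-- A (schemaless) mapping over variable type `V`: a partial assignment of spans. -/
abbrev Mapping (V : Type) : Type := V → Option Span

/-- `m` is a mapping of document `d`. -/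
def MappingOf {α V : Type} (d : List α) (m : Mapping V) : Prop :=
  ∀ x s, m x = some s → IsSpanOf d s

/-- A spanner: maps documents to sets of mappings. -/
abbrev Spanner (α V : Type) : Type := List α → Set (Mapping V)

/-- Labels of a variable-set automaton: letters and variable markers. -/
inductive Label (α V : Type) : Type where
  | letter (a : α)
  | vopen (x : V)
  | vclose (x : V)
deriving DecidableEq

/-- The sequence of letters of a ref-word. -/
def letters {α V : Type} (w : List (Label α V)) : List α :=
  w.filterMap fun l => match l with
    | Label.letter a => some a
    | _ => none

/-- A ref-word is valid if for each variable, either its markers do not appear, or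
the opening and closing markers appear exactly once with the opening first. -/
def ValidRef {α V : Type} [DecidableEq α] [DecidableEq V] (w : List (Label α V)) : Prop :=
  ∀ x : V,
    (Label.vopen x ∉ w ∧ Label.vclose x ∉ w) ∨
    (w.count (Label.vopen x) = 1 ∧ w.count (Label.vclose x) = 1 ∧
      w.idxOf (Label.vopen x) < w.idxOf (Label.vclose x))

/-- The mapping defined by a (valid) ref-word: each marked variable is sent to the
span delimited by the positions at which its markers are read. -/
def refMapping {α V : Type} [DecidableEq α] [DecidableEq V] (w : List (Label α V)) :
    Mapping V := fun x =>
  if Label.vopen x ∈ w then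
    some ((letters (w.take (w.idxOf (Label.vopen x)))).length,
          (letters (w.take (w.idxOf (Label.vclose x)))).length)
  else none

/-- A variable-set automaton with state type `Q`. -/
structure VA (α V Q : Type) : Type where
  init : Q
  final : Set Q
  trans : Q → Label α V → Q → Prop

/-- Paths in a VA. -/
inductive VA.Path {α V Q : Type} (A : VA α V Q) : Q → List (Label α V) → Q → Prop where
  | nil (q : Q) : VA.Path A q [] q
  | cons {q q' q'' : Q} {l : Label α V} {w : List (Label α V)} :
      A.trans q l q' → VA.Path A q' w q'' → VA.Path A q (l :: w) q''

/-- The VA accepts the ref-word `w` (an accepting run reads `w`). -/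
def VA.AcceptsRef {α V Q : Type} (A : VA α V Q) (w : List (Label α V)) : Prop :=
  ∃ qf ∈ A.final, A.Path A.init w qf

/-- A VA is sequential if every accepting run is valid. -/
def VA.Sequential {α V Q : Type} [DecidableEq α] [DecidableEq V] (A : VA α V Q) : Prop :=
  ∀ w, A.AcceptsRef w → ValidRef w

/-- The spanner defined by a (sequential) VA. -/
def VA.spanner {α V Q : Type} [DecidableEq α] [DecidableEq V] (A : VA α V Q) :
    Spanner α V := fun d =>
  {m | ∃ w, A.AcceptsRef w ∧ letters w = d ∧ refMapping w = m}

/-- A spanner is regular if it is defined by some sequential VA with finitely many states. -/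
def IsRegular {α V : Type} [DecidableEq α] [DecidableEq V] (P : Spanner α V) : Prop :=
  ∃ (Q : Type) (_ : Fintype Q) (A : VA α V Q), A.Sequential ∧ A.spanner = P

/-- The skyline operator: keep only the mappings of `P d` that are maximal under `R d`. -/
def skyline {α V : Type} (P : Spanner α V)
    (R : List α → Mapping V → Mapping V → Prop) : Spanner α V := fun d =>
  {m | m ∈ P d ∧ ∀ m' ∈ P d, m' ≠ m → ¬ R d m m'}

/-- The variable inclusion domination relation: `m2` extends `m1`. -/
def varIncRel {V : Type} (m1 m2 : Mapping V) : Prop :=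
  ∀ x s, m1 x = some s → m2 x = some s

/-- Two mappings have the same domain. -/
def sameDom {V : Type} (m1 m2 : Mapping V) : Prop :=
  ∀ x, m1 x = none ↔ m2 x = none

/-- The span inclusion domination relation. -/
def spanIncRel {V : Type} (m1 m2 : Mapping V) : Prop :=
  sameDom m1 m2 ∧
    ∀ x s1 s2, m1 x = some s1 → m2 x = some s2 → s2.1 ≤ s1.1 ∧ s1.2 ≤ s2.2

/-- The left-to-right domination relation: same start, `m2` no shorter. -/
def ltrRel {V : Type} (m1 m2 : Mapping V) : Prop :=
  sameDom m1 m2 ∧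
    ∀ x s1 s2, m1 x = some s1 → m2 x = some s2 →
      s1.1 = s2.1 ∧ s1.2 - s1.1 ≤ s2.2 - s2.1

/-- The span length domination relation: `m2`'s spans are no shorter. -/
def spanLenRel {V : Type} (m1 m2 : Mapping V) : Prop :=
  sameDom m1 m2 ∧
    ∀ x s1 s2, m1 x = some s1 → m2 x = some s2 → s1.2 - s1.1 ≤ s2.2 - s2.1


section Inter

variable {α V : Type}

set_option linter.unusedSectionVars false

/-- `l` is a marker label. -/
def IsM (l : Label α V) : Prop := match l with
  | .letter _ => False
  | _ => True

lemma isM_vopen (x : V) : IsM (Label.vopen (α := α) x) := trivial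
lemma isM_vclose (x : V) : IsM (Label.vclose (α := α) x) := trivial

lemma letters_append (u v : List (Label α V)) : letters (u ++ v) = letters u ++ letters v :=
  List.filterMap_append ..

lemma letters_marker_cons {l : List (Label α V)} {a : Label α V} (h : IsM a) :
    letters (a :: l) = letters l := by
  cases a <;> simp [IsM] at h ⊢ <;> rfl

lemma letters_letter_cons (a : α) (l : List (Label α V)) :
    letters (Label.letter a :: l) = a :: letters l := rfl

lemma letters_markers {u : List (Label α V)} (h : ∀ l ∈ u, IsM l) : letters u = [] := by
  induction u with
  | nil => rfl
  | cons a l ih =>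
    rw [letters_marker_cons (h a (by simp))]
    exact ih fun x hx => h x (by simp [hx])

lemma letters_eq_nil_iff {u : List (Label α V)} : letters u = [] ↔ ∀ l ∈ u, IsM l := by
  constructor
  · induction u with
    | nil => intro _ l hl; simp at hl
    | cons b u ih =>
      intro h l hl
      cases b with
      | letter c => rw [letters_letter_cons] at h; simp at h
      | vopen y =>
        rcases List.mem_cons.mp hl with rfl | hl'
        · exact isM_vopen y
        · exact ih (by rwa [letters_marker_cons (isM_vopen y)] at h) l hl'
      | vclose y =>
        rcases List.mem_cons.mp hl with rfl | hl'
        · exact isM_vclose y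
        · exact ih (by rwa [letters_marker_cons (isM_vclose y)] at h) l hl'
  · exact letters_markers

lemma path_append {Q : Type} {A : VA α V Q} {q q' q'' : Q} {u v : List (Label α V)}
    (h1 : A.Path q u q') (h2 : A.Path q' v q'') : A.Path q (u ++ v) q'' := by
  induction h1 with
  | nil => exact h2
  | cons ht _ ih => exact VA.Path.cons ht (ih h2)

lemma path_split {Q : Type} {A : VA α V Q} {q q'' : Q} {u v : List (Label α V)}
    (h : A.Path q (u ++ v) q'') : ∃ q', A.Path q u q' ∧ A.Path q' v q'' := by
  induction u generalizing q with
  | nil => exact ⟨q, VA.Path.nil q, h⟩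
  | cons l u ih =>
    rcases h with _ | ⟨ht, hp⟩
    rcases ih hp with ⟨q', h1, h2⟩
    exact ⟨q', VA.Path.cons ht h1, h2⟩

/-- Paths through an explicit list of intermediate states. -/
inductive PT {Q : Type} (A : VA α V Q) : Q → List Q → List (Label α V) → Q → Prop where
  | nil (q : Q) : PT A q [] [] q
  | cons {q s t : Q} {l : Label α V} {L : List Q} {w : List (Label α V)} :
      A.trans q l s → PT A s L w t → PT A q (s :: L) (l :: w) t

lemma path_pt {Q : Type} {A : VA α V Q} {q t : Q} {w : List (Label α V)}
    (h : A.Path q w t) : ∃ L : List Q, L.length = w.length ∧ PT A q L w t := by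
  induction h with
  | nil q => exact ⟨[], rfl, PT.nil q⟩
  | @cons q q' q'' l w ht _ ih =>
    rcases ih with ⟨L, hL, hpt⟩
    exact ⟨q' :: L, by simp [hL], PT.cons ht hpt⟩

lemma pt_path {Q : Type} {A : VA α V Q} {q t : Q} {L : List Q} {w : List (Label α V)}
    (h : PT A q L w t) : A.Path q w t := by
  induction h with
  | nil q => exact VA.Path.nil q
  | cons ht _ ih => exact VA.Path.cons ht ih

lemma pt_split_mid {Q : Type} {A : VA α V Q} {q t s : Q} (L1 : List Q) {L2 : List Q}
    {w : List (Label α V)} (h : PT A q (L1 ++ s :: L2) w t) :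
    ∃ w1 w2, w = w1 ++ w2 ∧ w1.length = L1.length + 1 ∧ A.Path q w1 s ∧ PT A s L2 w2 t := by
  induction L1 generalizing q w with
  | nil =>
    rcases h with _ | ⟨ht, hpt⟩
    exact ⟨[_], _, rfl, rfl, VA.Path.cons ht (VA.Path.nil _), hpt⟩
  | cons s' L1 ih =>
    rcases h with _ | ⟨ht, hpt⟩
    rcases ih hpt with ⟨w1, w2, rfl, hlen, hp, hpt2⟩
    exact ⟨_ :: w1, w2, rfl, by simp [hlen], VA.Path.cons ht hp, hpt2⟩

lemma exists_dup_of_not_nodup {β : Type} {L : List β} (h : ¬ L.Nodup) :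
    ∃ (a : β) (l1 l2 l3 : List β), L = l1 ++ a :: (l2 ++ a :: l3) := by
  induction L with
  | nil => simp at h
  | cons x L ih =>
    by_cases hx : x ∈ L
    · rcases List.append_of_mem hx with ⟨l2, l3, rfl⟩
      exact ⟨x, [], l2, l3, rfl⟩
    · have : ¬ L.Nodup := fun hn => h (List.nodup_cons.mpr ⟨hx, hn⟩)
      rcases ih this with ⟨a, l1, l2, l3, rfl⟩
      exact ⟨a, x :: l1, l2, l3, rfl⟩

lemma path_loop {Q : Type} [Fintype Q] {A : VA α V Q} {q t : Q} {y : List (Label α V)}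
    (h : A.Path q y t) (hlen : Fintype.card Q < y.length) :
    ∃ y1 y2 y3 s, y = y1 ++ y2 ++ y3 ∧ y2 ≠ [] ∧
      A.Path q y1 s ∧ A.Path s y2 s ∧ A.Path s y3 t := by
  rcases path_pt h with ⟨L, hL, hpt⟩
  have hnd : ¬ L.Nodup := by
    intro hn
    have := hn.length_le_card
    omega
  rcases exists_dup_of_not_nodup hnd with ⟨s, l1, l2, l3, rfl⟩
  rcases pt_split_mid l1 hpt with ⟨w1, w2, rfl, _, hp1, hpt2⟩
  rcases pt_split_mid l2 hpt2 with ⟨w21, w22, rfl, hlen21, hp2, hpt3⟩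
  exact ⟨w1, w21, w22, s, by simp, by intro h0; rw [h0] at hlen21; simp at hlen21,
    hp1, hp2, pt_path hpt3⟩

/-- All marker-blocks of `w` have length at most `n`. -/
def Bounded (n : ℕ) (w : List (Label α V)) : Prop :=
  ∀ x y z : List (Label α V), w = x ++ y ++ z → (∀ l ∈ y, IsM l) → y.length ≤ n

lemma bounded_suffix {n : ℕ} {x0 w : List (Label α V)} (h : Bounded n (x0 ++ w)) :
    Bounded n w := by
  intro x y z hw hy
  exact h (x0 ++ x) y z (by rw [hw]; simp) hy

lemma valid_count_le_one [DecidableEq α] [DecidableEq V] {w : List (Label α V)} (h : ValidRef w) (l : Label α V)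
    (hl : IsM l) : w.count l ≤ 1 := by
  cases l with
  | letter a => exact absurd hl id
  | vopen x =>
    rcases h x with ⟨h1, _⟩ | ⟨h1, _⟩
    · have := List.count_eq_zero_of_not_mem h1; omega
    · omega
  | vclose x =>
    rcases h x with ⟨_, h1⟩ | ⟨_, h1, _⟩
    · have := List.count_eq_zero_of_not_mem h1; omega
    · omega

lemma bounded_of_accepted [DecidableEq α] [DecidableEq V] {Q : Type} [Fintype Q] {A : VA α V Q} (hseq : A.Sequential)
    {w : List (Label α V)} (hacc : A.AcceptsRef w) : Bounded (Fintype.card Q) w := by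
  rcases hacc with ⟨qf, hqf, hpath⟩
  intro x y z hw hy
  by_contra hlen
  push_neg at hlen
  subst hw
  rw [List.append_assoc] at hpath
  rcases path_split hpath with ⟨s0, hpx, hrest⟩
  rcases path_split hrest with ⟨s1, hpy, hpz⟩
  rcases path_loop hpy hlen with ⟨y1, y2, y3, s, rfl, hne, hp1, hp2, hp3⟩
  -- pumped word
  have hacc' : A.AcceptsRef (x ++ (y1 ++ (y2 ++ (y2 ++ (y3 ++ z))))) :=
    ⟨qf, hqf, path_append hpx (path_append hp1 (path_append hp2
      (path_append hp2 (path_append hp3 hpz))))⟩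
  have hval := hseq _ hacc'
  rcases List.exists_mem_of_ne_nil y2 hne with ⟨l0, hl0⟩
  have hl0m : IsM l0 := hy l0 (by simp [hl0])
  have hcnt : 2 ≤ (x ++ (y1 ++ (y2 ++ (y2 ++ (y3 ++ z))))).count l0 := by
    have hpos : 0 < y2.count l0 := List.count_pos_iff.mpr hl0
    simp only [List.count_append]
    omega
  cases l0 with
  | letter a => exact absurd hl0m id
  | vopen x0 =>
    rcases hval x0 with ⟨h1, _⟩ | ⟨h1, _⟩
    · exact h1 (List.count_pos_iff.mp (by omega))
    · omega
  | vclose x0 =>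
    rcases hval x0 with ⟨_, h1⟩ | ⟨_, h1, _⟩
    · exact h1 (List.count_pos_iff.mp (by omega))
    · omega

end Inter
section Inter2

variable {α V : Type}

set_option linter.unusedSectionVars false

/-- The index of the gap (number of letters before) in which marker `l` occurs. -/
def gapIdx [DecidableEq α] [DecidableEq V] (w : List (Label α V)) (l : Label α V) : ℕ :=
  (letters (w.take (w.idxOf l))).length

lemma isM_ne_letter {l : Label α V} (hl : IsM l) (a : α) : l ≠ Label.letter a := by
  cases l with
  | letter b => exact absurd hl id
  | vopen x => simp
  | vclose x => simp

/-- `BlockRel P w u` : `u` is obtained from `w` by permuting the markers inside each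
block (maximal run of markers between letters), after adding the markers `P` to the
first block of `w`. -/
inductive BlockRel : Multiset (Label α V) → List (Label α V) → List (Label α V) → Prop where
  | base (P : Multiset (Label α V)) (u : List (Label α V)) (hm : ∀ l ∈ u, IsM l)
      (hp : (u : Multiset (Label α V)) = P) : BlockRel P [] u
  | mark {P : Multiset (Label α V)} {w u : List (Label α V)} (l : Label α V) (hl : IsM l)
      (h : BlockRel (l ::ₘ P) w u) : BlockRel P (l :: w) u
  | letter {P : Multiset (Label α V)} {w u : List (Label α V)} (a : α)
      (v : List (Label α V)) (hm : ∀ l ∈ v, IsM l)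
      (hv : (v : Multiset (Label α V)) = P) (h : BlockRel 0 w u) :
      BlockRel P (Label.letter a :: w) (v ++ (Label.letter a :: u))

lemma blockrel_letters {P : Multiset (Label α V)} {w u : List (Label α V)}
    (h : BlockRel P w u) : letters u = letters w := by
  induction h with
  | base P u hm hp => rw [letters_markers hm]; rfl
  | mark l hl h ih => rw [letters_marker_cons hl, ih]
  | letter a v hm hv h ih =>
    rw [letters_append, letters_markers hm, letters_letter_cons, letters_letter_cons, ih]
    rfl

lemma blockrel_prepend {P : Multiset (Label α V)} {w u : List (Label α V)} :
    ∀ (m : List (Label α V)), (∀ l ∈ m, IsM l) →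
      BlockRel ((m : Multiset (Label α V)) + P) w u → BlockRel P (m ++ w) u := by
  intro m
  induction m generalizing P with
  | nil => intro _ h; rw [List.nil_append]; rwa [Multiset.coe_nil, zero_add] at h
  | cons l m ih =>
    intro hm h
    rw [List.cons_append]
    refine BlockRel.mark l (hm l (by simp)) (ih (fun x hx => hm x (by simp [hx])) ?_)
    rwa [← Multiset.cons_coe, Multiset.cons_add, ← Multiset.add_cons] at h

lemma blockrel_cases {P : Multiset (Label α V)} {w u : List (Label α V)}
    (h : BlockRel P w u) :
    ((∀ l ∈ w, IsM l) ∧ (∀ l ∈ u, IsM l) ∧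
      (w : Multiset (Label α V)) + P = (u : Multiset (Label α V))) ∨
    (∃ (m : List (Label α V)) (a : α) (w' v u' : List (Label α V)),
      w = m ++ (Label.letter a :: w') ∧ u = v ++ (Label.letter a :: u') ∧
      (∀ l ∈ m, IsM l) ∧ (∀ l ∈ v, IsM l) ∧
      (m : Multiset (Label α V)) + P = (v : Multiset (Label α V)) ∧ BlockRel 0 w' u') := by
  induction h with
  | base P u hm hp =>
    left
    exact ⟨by simp, hm, by rw [Multiset.coe_nil, zero_add, hp]⟩
  | mark l hl h ih =>
    rcases ih with ⟨hw, hu, he⟩ | ⟨m, a, w', v, u', rfl, rfl, hmk, hvk, he, hbr⟩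
    · left
      refine ⟨?_, hu, ?_⟩
      · intro x hx; rcases List.mem_cons.mp hx with rfl | hx; exacts [hl, hw x hx]
      · rwa [← Multiset.cons_coe, Multiset.cons_add, ← Multiset.add_cons]
    · right
      refine ⟨l :: m, a, w', v, u', by simp, rfl, ?_, hvk, ?_, hbr⟩
      · intro x hx; rcases List.mem_cons.mp hx with rfl | hx; exacts [hl, hmk x hx]
      · rwa [← Multiset.cons_coe, Multiset.cons_add, ← Multiset.add_cons]
  | letter a v hm hv h ih =>
    right
    refine ⟨[], a, _, v, _, rfl, rfl, by simp, hm, ?_, h⟩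
    rw [Multiset.coe_nil, zero_add]
    exact hv.symm

lemma exists_block_split (w : List (Label α V)) :
    (∀ l ∈ w, IsM l) ∨ ∃ m a w', w = m ++ (Label.letter a :: w') ∧ (∀ l ∈ m, IsM l) := by
  induction w with
  | nil => left; simp
  | cons l w ih =>
    cases l with
    | letter a => right; exact ⟨[], a, w, rfl, by simp⟩
    | vopen x =>
      rcases ih with h | ⟨m, a, w', rfl, hm⟩
      · left; intro y hy; rcases List.mem_cons.mp hy with rfl | hy
        exacts [isM_vopen x, h y hy]
      · right; refine ⟨Label.vopen x :: m, a, w', rfl, ?_⟩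
        intro y hy; rcases List.mem_cons.mp hy with rfl | hy
        exacts [isM_vopen x, hm y hy]
    | vclose x =>
      rcases ih with h | ⟨m, a, w', rfl, hm⟩
      · left; intro y hy; rcases List.mem_cons.mp hy with rfl | hy
        exacts [isM_vclose x, h y hy]
      · right; refine ⟨Label.vclose x :: m, a, w', rfl, ?_⟩
        intro y hy; rcases List.mem_cons.mp hy with rfl | hy
        exacts [isM_vclose x, hm y hy]

lemma gapIdx_markers [DecidableEq α] [DecidableEq V] {w : List (Label α V)}
    (hm : ∀ l ∈ w, IsM l) (l : Label α V) : gapIdx w l = 0 := by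
  unfold gapIdx
  rw [letters_markers fun x hx => hm x (List.mem_of_mem_take hx)]
  rfl

lemma gapIdx_eq_zero [DecidableEq α] [DecidableEq V] {m r : List (Label α V)}
    (hm : ∀ l ∈ m, IsM l) {l : Label α V} (hl : l ∈ m) : gapIdx (m ++ r) l = 0 := by
  unfold gapIdx
  rw [List.idxOf_append_of_mem hl,
    List.take_append_of_le_length (le_of_lt (List.idxOf_lt_length_iff.mpr hl)),
    letters_markers fun x hx => hm x (List.mem_of_mem_take hx)]
  rfl

lemma gapIdx_succ [DecidableEq α] [DecidableEq V] {m r : List (Label α V)} {a : α}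
    {l : Label α V} (hm : ∀ x ∈ m, IsM x) (hl : IsM l) (hnm : l ∉ m) (hr : l ∈ r) :
    gapIdx (m ++ (Label.letter a :: r)) l = gapIdx r l + 1 := by
  have hne : Label.letter a ≠ l := (isM_ne_letter hl a).symm
  unfold gapIdx
  rw [List.idxOf_append_of_notMem hnm, List.idxOf_cons_ne _ hne]
  have h1 : m.length + (r.idxOf l).succ - m.length = (r.idxOf l).succ := by omega
  rw [List.take_append, List.take_of_length_le (by omega), h1,
    List.take_succ_cons, letters_append, letters_markers hm, letters_letter_cons]
  simp

lemma blockrel_bridge [DecidableEq α] [DecidableEq V] :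
    ∀ (n : ℕ) (w u : List (Label α V)), w.length ≤ n → BlockRel 0 w u →
      ∀ l, IsM l → ((l ∈ w ↔ l ∈ u) ∧ (l ∈ w → gapIdx w l = gapIdx u l)) := by
  intro n
  induction n with
  | zero =>
    intro w u hlen h l hl
    have hw : w = [] := List.length_eq_zero_iff.mp (by omega)
    subst hw
    rcases blockrel_cases h with ⟨_, _, he⟩ | ⟨m, a, w', v, u', habs, _⟩
    · have hu : u = [] := by
        have h0 : (u : Multiset (Label α V)) = 0 := by
          rw [Multiset.coe_nil, zero_add] at he
          exact he.symm
        simpa using h0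
      subst hu
      exact ⟨Iff.rfl, fun h => rfl⟩
    · exact absurd habs (by simp)
  | succ n ih =>
    intro w u hlen h l hl
    rcases blockrel_cases h with ⟨hw, hu, he⟩ | ⟨m, a, w', v, u', rfl, rfl, hmk, hvk, he, hbr⟩
    · rw [add_zero] at he
      constructor
      · rw [← Multiset.mem_coe, ← Multiset.mem_coe, he]
      · intro _; rw [gapIdx_markers hw, gapIdx_markers hu]
    · rw [add_zero] at he
      have hlen' : w'.length ≤ n := by
        rw [List.length_append, List.length_cons] at hlen; omega
      have ihw := ih w' u' hlen' hbr l hl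
      have hla : l ≠ Label.letter a := isM_ne_letter hl a
      have hmv : l ∈ m ↔ l ∈ v := by
        rw [← Multiset.mem_coe, ← Multiset.mem_coe, he]
      constructor
      · simp only [List.mem_append, List.mem_cons]
        constructor
        · rintro (h1 | h1 | h1)
          · exact Or.inl (hmv.mp h1)
          · exact absurd h1 hla
          · exact Or.inr (Or.inr (ihw.1.mp h1))
        · rintro (h1 | h1 | h1)
          · exact Or.inl (hmv.mpr h1)
          · exact absurd h1 hla
          · exact Or.inr (Or.inr (ihw.1.mpr h1))
      · intro hlw
        by_cases hm : l ∈ m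
        · rw [gapIdx_eq_zero hmk hm, gapIdx_eq_zero hvk (hmv.mp hm)]
        · have hlw' : l ∈ w' := by
            rcases List.mem_append.mp hlw with h1 | h1
            · exact absurd h1 hm
            · rcases List.mem_cons.mp h1 with h1 | h1
              exacts [absurd h1 hla, h1]
          have hnv : l ∉ v := fun h1 => hm (hmv.mpr h1)
          rw [gapIdx_succ hmk hl hm hlw', gapIdx_succ hvk hl hnv (ihw.1.mp hlw'),
            ihw.2 hlw']

lemma refMapping_spec [DecidableEq α] [DecidableEq V] {w : List (Label α V)} {x : V}
    (h : Label.vopen x ∈ w) :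
    refMapping w x = some (gapIdx w (Label.vopen x), gapIdx w (Label.vclose x)) := by
  simp [refMapping, h, gapIdx]

lemma refMapping_none [DecidableEq α] [DecidableEq V] {w : List (Label α V)} {x : V}
    (h : Label.vopen x ∉ w) : refMapping w x = none := by
  simp [refMapping, h]

lemma refMapping_congr [DecidableEq α] [DecidableEq V] {w u : List (Label α V)}
    (hlet : letters w = letters u)
    (hmem : ∀ l, IsM l → (l ∈ w ↔ l ∈ u))
    (hgap : ∀ l, IsM l → l ∈ w → gapIdx w l = gapIdx u l) :
    refMapping w = refMapping u := by
  funext x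
  by_cases ho : Label.vopen x ∈ w
  · have ho' := (hmem _ (isM_vopen x)).mp ho
    rw [refMapping_spec ho, refMapping_spec ho']
    have h1 : gapIdx w (Label.vopen x) = gapIdx u (Label.vopen x) := hgap _ (isM_vopen x) ho
    have h2 : gapIdx w (Label.vclose x) = gapIdx u (Label.vclose x) := by
      by_cases hc : Label.vclose x ∈ w
      · exact hgap _ (isM_vclose x) hc
      · have hc' : Label.vclose x ∉ u := fun h => hc ((hmem _ (isM_vclose x)).mpr h)
        unfold gapIdx
        rw [List.idxOf_of_notMem hc, List.idxOf_of_notMem hc',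
          List.take_length, List.take_length, hlet]
    rw [h1, h2]
  · rw [refMapping_none ho, refMapping_none (fun h => ho ((hmem _ (isM_vopen x)).mpr h))]

lemma count_le_of_append_left [DecidableEq α] [DecidableEq V] {l : Label α V} {m r : List (Label α V)} :
    List.count l m ≤ List.count l (m ++ r) := by
  rw [List.count_append]; omega

lemma blockrel_of_data [DecidableEq α] [DecidableEq V] :
    ∀ (n : ℕ) (w u : List (Label α V)), w.length ≤ n →
      letters w = letters u →
      (∀ l, IsM l → (l ∈ w ↔ l ∈ u)) →
      (∀ l, IsM l → l ∈ w → gapIdx w l = gapIdx u l) →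
      (∀ l, IsM l → w.count l ≤ 1) → (∀ l, IsM l → u.count l ≤ 1) →
      BlockRel 0 w u := by
  intro n
  induction n with
  | zero =>
    intro w u hlen hlet hmem _ _ _
    have hw : w = [] := List.length_eq_zero_iff.mp (by omega)
    subst hw
    refine BlockRel.base 0 u (fun l hl => ?_) ?_
    · rcases l with a | x | x
      · exfalso
        have : letters u = [] := hlet.symm
        rw [letters_eq_nil_iff] at this
        exact this _ hl
      · exact isM_vopen x
      · exact isM_vclose x
    · have : u = [] := by
        by_contra hne
        rcases List.exists_mem_of_ne_nil u hne with ⟨l, hl⟩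
        have hml : IsM l := by
          have : letters u = [] := hlet.symm
          rw [letters_eq_nil_iff] at this
          exact this _ hl
        exact absurd ((hmem l hml).mpr hl) (by simp)
      rw [this]; rfl
  | succ n ih =>
    intro w u hlen hlet hmem hgap hcw hcu
    rcases exists_block_split w with hw | ⟨m, a, w', rfl, hmk⟩
    · -- w is all markers
      have hlw : letters w = [] := letters_markers hw
      have hu : ∀ l ∈ u, IsM l := letters_eq_nil_iff.mp (hlet ▸ hlw)
      have hcoe : (u : Multiset (Label α V)) = (w : Multiset (Label α V)) := by
        ext l
        rw [Multiset.coe_count, Multiset.coe_count]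
        by_cases hml : IsM l
        · have h1 := hcw l hml
          have h2 := hcu l hml
          have h3 := (hmem l hml)
          rcases Nat.lt_or_ge (w.count l) 1 with h4 | h4
          · have : l ∉ w := fun h => by
              have := List.count_pos_iff.mpr h; omega
            rw [List.count_eq_zero_of_not_mem (fun h => this (h3.mpr h)),
              List.count_eq_zero_of_not_mem this]
          · have h5 : l ∈ w := List.count_pos_iff.mp (by omega)
            have h6 := List.count_pos_iff.mpr (h3.mp h5)
            omega
        · rw [List.count_eq_zero_of_not_mem (fun h => hml (hu l h)),
            List.count_eq_zero_of_not_mem (fun h => hml (hw l h))]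
      have hbase : BlockRel ((w : Multiset (Label α V)) + 0) [] u :=
        BlockRel.base _ u hu (by rw [add_zero, hcoe])
      have := blockrel_prepend w hw hbase
      rwa [List.append_nil] at this
    · -- w = m ++ letter a :: w'
      have hlw : letters (m ++ (Label.letter a :: w')) = a :: letters w' := by
        rw [letters_append, letters_markers hmk, letters_letter_cons]; rfl
      rcases exists_block_split u with hu | ⟨v, b, u', rfl, hvk⟩
      · exfalso
        rw [hlw, letters_markers hu] at hlet
        simp at hlet
      · have hlu : letters (v ++ (Label.letter b :: u')) = b :: letters u' := by
          rw [letters_append, letters_markers hvk, letters_letter_cons]; rfl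
        rw [hlw, hlu] at hlet
        injection hlet with hab hlet'
        subst hab
        -- membership in the first block
        have hmv : ∀ l, IsM l → (l ∈ m ↔ l ∈ v) := by
          intro l hl
          have hla : l ≠ Label.letter a := isM_ne_letter hl a
          constructor
          · intro hlm
            have hlw1 : l ∈ m ++ (Label.letter a :: w') := by simp [hlm]
            have hlu1 := (hmem l hl).mp hlw1
            by_contra hnv
            have hlu' : l ∈ u' := by
              rcases List.mem_append.mp hlu1 with h1 | h1
              · exact absurd h1 hnv
              · rcases List.mem_cons.mp h1 with h1 | h1
                exacts [absurd h1 hla, h1]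
            have h0 := gapIdx_eq_zero hmk hlm (r := Label.letter a :: w')
            have hs := gapIdx_succ (a := a) hvk hl hnv hlu'
            have := hgap l hl hlw1
            omega
          · intro hlv
            have hlu1 : l ∈ v ++ (Label.letter a :: u') := by simp [hlv]
            have hlw1 := (hmem l hl).mpr hlu1
            by_contra hnm
            have hlw' : l ∈ w' := by
              rcases List.mem_append.mp hlw1 with h1 | h1
              · exact absurd h1 hnm
              · rcases List.mem_cons.mp h1 with h1 | h1
                exacts [absurd h1 hla, h1]
            have h0 := gapIdx_eq_zero hvk hlv (r := Label.letter a :: u')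
            have hs := gapIdx_succ (a := a) hmk hl hnm hlw'
            have := hgap l hl hlw1
            omega
        have hmcoe : (v : Multiset (Label α V)) = (m : Multiset (Label α V)) := by
          ext l
          rw [Multiset.coe_count, Multiset.coe_count]
          by_cases hml : IsM l
          · have h1 : m.count l ≤ 1 :=
              le_trans count_le_of_append_left (hcw l hml)
            have h2 : v.count l ≤ 1 :=
              le_trans count_le_of_append_left (hcu l hml)
            have h3 := hmv l hml
            rcases Nat.lt_or_ge (m.count l) 1 with h4 | h4
            · have h5 : l ∉ m := fun h => by have := List.count_pos_iff.mpr h; omega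
              rw [List.count_eq_zero_of_not_mem (fun h => h5 (h3.mpr h)),
                List.count_eq_zero_of_not_mem h5]
            · have h5 : l ∈ m := List.count_pos_iff.mp (by omega)
              have h6 := List.count_pos_iff.mpr (h3.mp h5)
              omega
          · rw [List.count_eq_zero_of_not_mem (fun h => hml (hvk l h)),
              List.count_eq_zero_of_not_mem (fun h => hml (hmk l h))]
        -- conditions for the recursive call
        have hcw' : ∀ l, IsM l → w'.count l ≤ 1 := fun l hl => by
          have := hcw l hl
          rw [List.count_append, List.count_cons] at this
          omega
        have hcu' : ∀ l, IsM l → u'.count l ≤ 1 := fun l hl => by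
          have := hcu l hl
          rw [List.count_append, List.count_cons] at this
          omega
        have hnotboth : ∀ l, IsM l → l ∈ w' → l ∉ m := by
          intro l hl h1 h2
          have := hcw l hl
          rw [List.count_append, List.count_cons] at this
          have c1 := List.count_pos_iff.mpr h1
          have c2 := List.count_pos_iff.mpr h2
          omega
        have hnotboth' : ∀ l, IsM l → l ∈ u' → l ∉ v := by
          intro l hl h1 h2
          have := hcu l hl
          rw [List.count_append, List.count_cons] at this
          have c1 := List.count_pos_iff.mpr h1
          have c2 := List.count_pos_iff.mpr h2
          omega
        have hmem' : ∀ l, IsM l → (l ∈ w' ↔ l ∈ u') := by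
          intro l hl
          have hla : l ≠ Label.letter a := isM_ne_letter hl a
          constructor
          · intro h1
            have hnm := hnotboth l hl h1
            have h2 := (hmem l hl).mp (by simp [h1])
            rcases List.mem_append.mp h2 with h3 | h3
            · exact absurd ((hmv l hl).mpr h3) hnm
            · rcases List.mem_cons.mp h3 with h3 | h3
              exacts [absurd h3 hla, h3]
          · intro h1
            have hnv := hnotboth' l hl h1
            have h2 := (hmem l hl).mpr (by simp [h1])
            rcases List.mem_append.mp h2 with h3 | h3
            · exact absurd ((hmv l hl).mp h3) hnv
            · rcases List.mem_cons.mp h3 with h3 | h3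
              exacts [absurd h3 hla, h3]
        have hgap' : ∀ l, IsM l → l ∈ w' → gapIdx w' l = gapIdx u' l := by
          intro l hl h1
          have hnm := hnotboth l hl h1
          have h2 : l ∈ u' := (hmem' l hl).mp h1
          have hnv := hnotboth' l hl h2
          have := hgap l hl (by simp [h1])
          rw [gapIdx_succ hmk hl hnm h1, gapIdx_succ hvk hl hnv h2] at this
          omega
        have hlen' : w'.length ≤ n := by
          rw [List.length_append, List.length_cons] at hlen; omega
        have hbr' : BlockRel 0 w' u' := ih w' u' hlen' hlet' hmem' hgap' hcw' hcu'
        have hstep : BlockRel ((m : Multiset (Label α V)) + 0) (Label.letter a :: w')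
            (v ++ (Label.letter a :: u')) :=
          BlockRel.letter a v hvk (by rw [add_zero, hmcoe]) hbr'
        exact blockrel_prepend m hmk hstep

lemma valid_bridge [DecidableEq α] [DecidableEq V] {w1 w2 : List (Label α V)}
    (h1 : ValidRef w1) (h2 : ValidRef w2) (hrm : refMapping w1 = refMapping w2) :
    (∀ l, IsM l → (l ∈ w1 ↔ l ∈ w2)) ∧
    (∀ l, IsM l → l ∈ w1 → gapIdx w1 l = gapIdx w2 l) := by
  have hopen : ∀ x : V, Label.vopen x ∈ w1 ↔ Label.vopen x ∈ w2 := by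
    intro x
    constructor
    · intro h
      by_contra h'
      have e := refMapping_spec h
      rw [congrFun hrm x, refMapping_none h'] at e
      exact absurd e (by simp)
    · intro h
      by_contra h'
      have e := refMapping_spec h
      rw [← congrFun hrm x, refMapping_none h'] at e
      exact absurd e (by simp)
  have hclose : ∀ (w : List (Label α V)), ValidRef w →
      ∀ x : V, (Label.vclose x ∈ w ↔ Label.vopen x ∈ w) := by
    intro w hv x
    rcases hv x with ⟨ho, hc⟩ | ⟨ho, hc, _⟩
    · exact ⟨fun h => absurd h hc, fun h => absurd h ho⟩
    · exact ⟨fun _ => List.count_pos_iff.mp (by omega),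
        fun _ => List.count_pos_iff.mp (by omega)⟩
  have hgapopen : ∀ x : V, Label.vopen x ∈ w1 →
      gapIdx w1 (Label.vopen x) = gapIdx w2 (Label.vopen x) ∧
      gapIdx w1 (Label.vclose x) = gapIdx w2 (Label.vclose x) := by
    intro x h
    have e1 := refMapping_spec h
    have e2 := refMapping_spec ((hopen x).mp h)
    rw [congrFun hrm x, e2] at e1
    have e3 := Option.some.inj e1
    exact ⟨(congrArg Prod.fst e3).symm, (congrArg Prod.snd e3).symm⟩
  constructor
  · intro l hl
    cases l with
    | letter a => exact absurd hl id
    | vopen x => exact hopen x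
    | vclose x => rw [hclose w1 h1 x, hclose w2 h2 x]; exact hopen x
  · intro l hl hmem1
    cases l with
    | letter a => exact absurd hl id
    | vopen x => exact (hgapopen x hmem1).1
    | vclose x => exact (hgapopen x ((hclose w1 h1 x).mp hmem1)).2

end Inter2
section Inter3

variable {α V Q : Type}

set_option linter.unusedSectionVars false

/-- One step of the chain-assembly relation: insert the edge `e` into the collection
of chains `C` (summarized by their endpoints), possibly merging with existing chains. -/
inductive MStep (e : Q × Q) : Multiset (Q × Q) → Multiset (Q × Q) → Prop where
  | new (C) : MStep e C (e ::ₘ C)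
  | left (a : Q) (C) : MStep e ((a, e.1) ::ₘ C) ((a, e.2) ::ₘ C)
  | right (b : Q) (C) : MStep e ((e.2, b) ::ₘ C) ((e.1, b) ::ₘ C)
  | both (a b : Q) (C) : MStep e ((a, e.1) ::ₘ ((e.2, b) ::ₘ C)) ((a, b) ::ₘ C)

lemma mstep_cons {e x : Q × Q} {C C' : Multiset (Q × Q)} (h : MStep e C C') :
    MStep e (x ::ₘ C) (x ::ₘ C') := by
  cases h with
  | new C => rw [Multiset.cons_swap]; exact MStep.new _
  | left a C =>
    rw [Multiset.cons_swap x (a, e.1), Multiset.cons_swap x (a, e.2)]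
    exact MStep.left _ _
  | right b C =>
    rw [Multiset.cons_swap x (e.2, b), Multiset.cons_swap x (e.1, b)]
    exact MStep.right _ _
  | both a b C =>
    rw [Multiset.cons_swap x (a, e.1), Multiset.cons_swap x (e.2, b),
      Multiset.cons_swap x (a, b)]
    exact MStep.both _ _ _

/-- Invariant: the multiset `R` of markers read so far can be partitioned into
nonempty paths of `A` whose endpoints are the chains in `C`. -/
inductive Inv (A : VA α V Q) : Multiset (Label α V) → Multiset (Q × Q) → Prop where
  | nil : Inv A 0 0
  | cons {a b : Q} {u : List (Label α V)} {R : Multiset (Label α V)} {C : Multiset (Q × Q)}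
      (hne : u ≠ []) (hm : ∀ l ∈ u, IsM l) (hp : A.Path a u b) (h : Inv A R C) :
      Inv A ((u : Multiset (Label α V)) + R) ((a, b) ::ₘ C)

lemma coe_middle (u1 u2 : List (Label α V)) (l : Label α V) (R : Multiset (Label α V)) :
    ((u1 ++ (l :: u2) : List (Label α V)) : Multiset (Label α V)) + R
      = l ::ₘ ((u1 : Multiset (Label α V)) + ((u2 : Multiset (Label α V)) + R)) := by
  rw [← Multiset.coe_add, ← Multiset.cons_coe, Multiset.add_cons, Multiset.cons_add, add_assoc]

lemma path_cons_inv {A : VA α V Q} {q b : Q} {l : Label α V} {w : List (Label α V)}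
    (h : A.Path q (l :: w) b) : ∃ p', A.trans q l p' ∧ A.Path p' w b := by
  cases h with
  | cons ht hp => exact ⟨_, ht, hp⟩

lemma path_nil_inv {A : VA α V Q} {q b : Q} (h : A.Path q [] b) : q = b := by
  cases h with
  | nil => rfl

lemma inv_C_zero {A : VA α V Q} {R : Multiset (Label α V)} (h : Inv A R 0) : R = 0 := by
  suffices H : ∀ R C, Inv A R C → C = 0 → R = 0 from H R 0 h rfl
  intro R C h
  induction h with
  | nil => intro _; rfl
  | cons hne hm hp h ih => intro h0; exact absurd h0 (by simp)

lemma inv_R_zero {A : VA α V Q} {C : Multiset (Q × Q)} (h : Inv A 0 C) : C = 0 := by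
  suffices H : ∀ R C, Inv A R C → R = 0 → C = 0 from H 0 C h rfl
  intro R C h
  induction h with
  | nil => intro _; rfl
  | cons hne hm hp h ih =>
    intro h0
    exfalso
    have h1 := congrArg Multiset.card h0
    rename_i u _ _
    have hu : u.length ≥ 1 := by
      cases u with
      | nil => exact absurd rfl hne
      | cons x u => simp
    rw [Multiset.card_add, Multiset.coe_card, Multiset.card_zero] at h1
    omega

lemma inv_card {A : VA α V Q} {R : Multiset (Label α V)} {C : Multiset (Q × Q)}
    (h : Inv A R C) : Multiset.card C ≤ Multiset.card R := by
  induction h with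
  | nil => simp
  | cons hne hm hp h ih =>
    rename_i u _ _
    have : u.length ≥ 1 := by
      cases u with
      | nil => exact absurd rfl hne
      | cons x u => simp
    simp only [Multiset.card_cons, Multiset.card_add, Multiset.coe_card]
    omega

lemma inv_extract {A : VA α V Q} :
    ∀ {R : Multiset (Label α V)} {D : Multiset (Q × Q)}, Inv A R D →
      ∀ {a b : Q} {C : Multiset (Q × Q)}, D = (a, b) ::ₘ C →
        ∃ u R', u ≠ [] ∧ (∀ l ∈ u, IsM l) ∧ A.Path a u b ∧
          R = (u : Multiset (Label α V)) + R' ∧ Inv A R' C := by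
  intro R D h
  induction h with
  | nil => intro a b C h0; exact absurd h0.symm (Multiset.cons_ne_zero)
  | @cons a0 b0 u R0 C0 hne hm hp h ih =>
    intro a b C heq
    rcases Multiset.cons_eq_cons.mp heq with ⟨h1, h2⟩ | ⟨h1, cs, h2, h3⟩
    · obtain ⟨rfl, rfl⟩ : a0 = a ∧ b0 = b :=
        ⟨congrArg Prod.fst h1, congrArg Prod.snd h1⟩
      exact ⟨u, R0, hne, hm, hp, rfl, h2 ▸ h⟩
    · rcases ih h2 with ⟨u', R1, hne', hm', hp', hR1, hinv1⟩
      refine ⟨u', (u : Multiset (Label α V)) + R1, hne', hm', hp', ?_, ?_⟩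
      · rw [hR1, add_left_comm]
      · rw [h3]
        exact Inv.cons hne hm hp hinv1

lemma coe_concat_add (u : List (Label α V)) (l : Label α V) (R : Multiset (Label α V)) :
    ((u ++ [l] : List (Label α V)) : Multiset (Label α V)) + R
      = l ::ₘ ((u : Multiset (Label α V)) + R) := by
  have : ((u ++ [l] : List (Label α V)) : Multiset (Label α V))
      = (u : Multiset (Label α V)) + (l ::ₘ 0) := by
    rw [← Multiset.coe_add]
    rfl
  rw [this, add_assoc, Multiset.cons_add, zero_add, Multiset.add_cons]

lemma inv_step {A : VA α V Q} {p p' : Q} {l : Label α V} (ht : A.trans p l p') (hl : IsM l)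
    {C C' : Multiset (Q × Q)} {R : Multiset (Label α V)}
    (hs : MStep (p, p') C C') (hi : Inv A R C) : Inv A (l ::ₘ R) C' := by
  cases hs with
  | new C =>
    have h2 : Inv A (([l] : List (Label α V)) + R) ((p, p') ::ₘ C) :=
      Inv.cons (by simp) (by intro x hx; rw [List.mem_singleton] at hx; subst hx; exact hl)
        (VA.Path.cons ht (VA.Path.nil p')) hi
    rwa [show (([l] : List (Label α V)) : Multiset (Label α V)) + R = l ::ₘ R by
      rw [← Multiset.cons_coe, Multiset.cons_add, Multiset.coe_nil, zero_add]] at h2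
  | left a C0 =>
    rcases inv_extract hi rfl with ⟨u, R', hne, hm, hp, rfl, hinv⟩
    have h2 : Inv A (((u ++ [l] : List (Label α V)) : Multiset (Label α V)) + R')
        ((a, p') ::ₘ C0) :=
      Inv.cons (by simp) (by
          intro x hx
          rcases List.mem_append.mp hx with hx | hx
          · exact hm x hx
          · rw [List.mem_singleton] at hx; subst hx; exact hl)
        (path_append hp (VA.Path.cons ht (VA.Path.nil p'))) hinv
    rwa [coe_concat_add] at h2
  | right b C0 =>
    rcases inv_extract hi rfl with ⟨u, R', hne, hm, hp, rfl, hinv⟩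
    have h2 : Inv A (((l :: u : List (Label α V)) : Multiset (Label α V)) + R')
        ((p, b) ::ₘ C0) :=
      Inv.cons (by simp) (by
          intro x hx
          rcases List.mem_cons.mp hx with hx | hx
          · subst hx; exact hl
          · exact hm x hx)
        (VA.Path.cons ht hp) hinv
    rwa [← Multiset.cons_coe, Multiset.cons_add] at h2
  | both a b C0 =>
    rcases inv_extract hi rfl with ⟨u1, R1, hne1, hm1, hp1, rfl, hinv1⟩
    rcases inv_extract hinv1 rfl with ⟨u2, R2, hne2, hm2, hp2, rfl, hinv2⟩
    have h2 : Inv A (((u1 ++ (l :: u2) : List (Label α V)) : Multiset (Label α V)) + R2)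
        ((a, b) ::ₘ C0) :=
      Inv.cons (by simp) (by
          intro x hx
          rcases List.mem_append.mp hx with hx | hx
          · exact hm1 x hx
          · rcases List.mem_cons.mp hx with hx | hx
            · subst hx; exact hl
            · exact hm2 x hx)
        (path_append hp1 (VA.Path.cons ht hp2)) hinv2
    rwa [coe_middle] at h2

lemma inv_remove {A : VA α V Q} :
    ∀ {S : Multiset (Label α V)} {C : Multiset (Q × Q)}, Inv A S C →
      ∀ {l : Label α V} {R : Multiset (Label α V)}, S = l ::ₘ R →
        ∃ p p' C', A.trans p l p' ∧ MStep (p, p') C' C ∧ Inv A R C' := by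
  intro S C h
  induction h with
  | nil => intro l R h0; exact absurd h0 (by simp)
  | @cons a b u R0 C0 hne hm hp h ih =>
    intro l R heq
    by_cases hlu : l ∈ u
    · rcases List.append_of_mem hlu with ⟨u1, u2, rfl⟩
      rcases path_split hp with ⟨p, hp1, hp2'⟩
      rcases path_cons_inv hp2' with ⟨p', ht, hp2⟩
      have hR : R = (u1 : Multiset (Label α V)) + ((u2 : Multiset (Label α V)) + R0) := by
        have h2 : l ::ₘ ((u1 : Multiset (Label α V)) + ((u2 : Multiset (Label α V)) + R0))
            = l ::ₘ R := by
          rw [← heq, coe_middle]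
        exact (Multiset.cons_inj_right _ |>.mp h2).symm
      by_cases h1 : u1 = []
      · subst h1
        have ha : a = p := path_nil_inv hp1
        by_cases h2 : u2 = []
        · subst h2
          have hb : p' = b := path_nil_inv hp2
          refine ⟨a, b, C0, by rw [ha, ← hb]; exact ht, MStep.new C0, ?_⟩
          rw [hR]
          simpa using h
        · refine ⟨a, p', (p', b) ::ₘ C0, by rw [ha]; exact ht, MStep.right b C0, ?_⟩
          rw [hR]
          have := Inv.cons h2 (fun x hx => hm x (by simp [hx])) hp2 h
          simpa using this
      · by_cases h2 : u2 = []
        · subst h2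
          have hb : p' = b := path_nil_inv hp2
          refine ⟨p, b, (a, p) ::ₘ C0, by rw [← hb]; exact ht, MStep.left a C0, ?_⟩
          rw [hR]
          have := Inv.cons h1 (fun x hx => hm x (by simp [hx])) hp1 h
          simpa using this
        · refine ⟨p, p', (a, p) ::ₘ ((p', b) ::ₘ C0), ht, MStep.both a b C0, ?_⟩
          rw [hR]
          exact Inv.cons h1 (fun x hx => hm x (by simp [hx])) hp1
            (Inv.cons h2 (fun x hx => hm x (by simp [hx])) hp2 h)
    · have hlR : l ∈ R0 := by
        have hmem : l ∈ (u : Multiset (Label α V)) + R0 := by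
          rw [heq]; exact Multiset.mem_cons_self l R
        rcases Multiset.mem_add.mp hmem with h2 | h2
        · exact absurd (Multiset.mem_coe.mp h2) hlu
        · exact h2
      rcases Multiset.exists_cons_of_mem hlR with ⟨R0', rfl⟩
      have hR : R = (u : Multiset (Label α V)) + R0' := by
        have h2 : l ::ₘ ((u : Multiset (Label α V)) + R0') = l ::ₘ R := by
          rw [← heq, Multiset.add_cons]
        exact (Multiset.cons_inj_right _ |>.mp h2).symm
      rcases ih rfl with ⟨p, p', C0', ht, hs, hinv⟩
      exact ⟨p, p', (a, b) ::ₘ C0', ht, mstep_cons hs, hR ▸ Inv.cons hne hm hp hinv⟩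

/-- Reading a list of markers, assembling chains, keeping the collection small. -/
inductive ReadRun (A : VA α V Q) (N : ℕ) :
    Multiset (Q × Q) → List (Label α V) → Multiset (Q × Q) → Prop where
  | nil (C) : ReadRun A N C [] C
  | cons {C C' C'' : Multiset (Q × Q)} {l : Label α V} {w : List (Label α V)} (p p' : Q)
      (ht : A.trans p l p') (hs : MStep (p, p') C C') (hcard : Multiset.card C' ≤ N)
      (h : ReadRun A N C' w C'') : ReadRun A N C (l :: w) C''

lemma readrun_snoc {A : VA α V Q} {N : ℕ} {C C₁ : Multiset (Q × Q)}
    {v : List (Label α V)} {l : Label α V}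
    (h : ReadRun A N C v C₁) :
    ∀ {C₂ : Multiset (Q × Q)} {p p' : Q}, A.trans p l p' → MStep (p, p') C₁ C₂ →
      Multiset.card C₂ ≤ N → ReadRun A N C (v ++ [l]) C₂ := by
  induction h with
  | nil C =>
    intro C₂ p p' ht hs hcard
    exact ReadRun.cons p p' ht hs hcard (ReadRun.nil _)
  | cons q q' ht' hs' hcard' h ih =>
    intro C₂ p p' ht hs hcard
    exact ReadRun.cons q q' ht' hs' hcard' (ih ht hs hcard)

lemma readrun_of_inv {A : VA α V Q} {N : ℕ} :
    ∀ (v : List (Label α V)) (C : Multiset (Q × Q)),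
      Inv A (v : Multiset (Label α V)) C → v.length ≤ N → ReadRun A N 0 v C := by
  intro v
  induction v using List.reverseRecOn with
  | nil =>
    intro C hinv _
    rw [show (([] : List (Label α V)) : Multiset (Label α V)) = 0 from rfl] at hinv
    rw [inv_R_zero hinv]
    exact ReadRun.nil 0
  | append_singleton v l ih =>
    intro C hinv hlen
    have hcoe : ((v ++ [l] : List (Label α V)) : Multiset (Label α V))
        = l ::ₘ (v : Multiset (Label α V)) := by
      rw [← Multiset.coe_add, ← Multiset.cons_coe, Multiset.add_cons, Multiset.coe_nil,
        add_zero]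
    rw [hcoe] at hinv
    rcases inv_remove hinv rfl with ⟨p, p', C', ht, hs, hinv'⟩
    have hlen' : v.length + 1 ≤ N := by
      have : (v ++ [l]).length = v.length + 1 := by simp
      omega
    have hcard : Multiset.card C ≤ N := by
      have h1 := inv_card hinv
      simp [Multiset.coe_card] at h1
      omega
    exact readrun_snoc (ih C' hinv' (by omega)) ht hs hcard

end Inter3
section Inter4

variable {α V Q1 Q2 : Type}

set_option linter.unusedSectionVars false

lemma filterMap_id_add {X : Type} (s t : Multiset (Option X)) :
    Multiset.filterMap id (s + t) = Multiset.filterMap id s + Multiset.filterMap id t := by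
  induction t using Multiset.induction_on with
  | empty => simp
  | cons a t ih =>
    rw [Multiset.add_cons]
    cases a with
    | none =>
      rw [Multiset.filterMap_cons_none (f := id) _ _ rfl,
        Multiset.filterMap_cons_none (f := id) _ _ rfl, ih]
    | some b =>
      rw [Multiset.filterMap_cons_some id _ _ rfl, Multiset.filterMap_cons_some id _ _ rfl,
        ih, Multiset.add_cons]

lemma filterMap_id_map_some {X : Type} (C : Multiset X) :
    Multiset.filterMap id (Multiset.map some C) = C := by
  rw [Multiset.filterMap_map]
  have h : (id ∘ some : X → Option X) = some ∘ id := rfl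
  rw [h, Multiset.filterMap_eq_map, Multiset.map_id]

lemma filterMap_id_replicate_none {X : Type} (k : ℕ) :
    Multiset.filterMap id (Multiset.replicate k (none : Option X)) = 0 := by
  induction k with
  | zero => rfl
  | succ k ih => rw [Multiset.replicate_succ, Multiset.filterMap_cons_none _ _ rfl, ih]

/-- The multiset represented by a padded `Sym`. -/
def toM {X : Type} {N : ℕ} (s : Sym (Option X) N) : Multiset X :=
  Multiset.filterMap id (s : Multiset (Option X))

/-- Represent a multiset of size at most `N` as a padded `Sym`. -/
def ofM {X : Type} (N : ℕ) (C : Multiset X) (h : Multiset.card C ≤ N) : Sym (Option X) N :=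
  ⟨Multiset.map some C + Multiset.replicate (N - Multiset.card C) none, by
    rw [Multiset.card_add, Multiset.card_map, Multiset.card_replicate]; omega⟩

lemma toM_ofM {X : Type} (N : ℕ) (C : Multiset X) (h : Multiset.card C ≤ N) :
    toM (ofM N C h) = C := by
  show Multiset.filterMap id _ = C
  rw [show ((ofM N C h : Sym (Option X) N) : Multiset (Option X))
      = Multiset.map some C + Multiset.replicate (N - Multiset.card C) none from rfl]
  rw [filterMap_id_add, filterMap_id_map_some, filterMap_id_replicate_none, add_zero]

/-- End-of-block condition: the chains form a single path from `q2` to `q'` (or no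
markers were read and `q' = q2`). -/
def endOK (C : Multiset (Q2 × Q2)) (q2 q' : Q2) : Prop :=
  (C = 0 ∧ q' = q2) ∨ C = (q2, q') ::ₘ 0

/-- The product automaton recognizing the intersection of two spanners. -/
def interVA (A1 : VA α V Q1) (A2 : VA α V Q2) (N : ℕ) :
    VA α V (Q1 × Q2 × Sym (Option (Q2 × Q2)) N) where
  init := (A1.init, A2.init, ofM N 0 (by simp))
  final := {s | s.1 ∈ A1.final ∧ ∃ q', endOK (toM s.2.2) s.2.1 q' ∧ q' ∈ A2.final}
  trans := fun s l t =>
    A1.trans s.1 l t.1 ∧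
    match l with
    | Label.letter a =>
        (∃ q', endOK (toM s.2.2) s.2.1 q' ∧ A2.trans q' (Label.letter a) t.2.1) ∧
        toM t.2.2 = 0
    | _ => t.2.1 = s.2.1 ∧ ∃ p p', A2.trans p l p' ∧ MStep (p, p') (toM s.2.2) (toM t.2.2)

lemma interVA_path_proj {A1 : VA α V Q1} {A2 : VA α V Q2} {N : ℕ}
    {s t : Q1 × Q2 × Sym (Option (Q2 × Q2)) N} {w : List (Label α V)}
    (h : (interVA A1 A2 N).Path s w t) : A1.Path s.1 w t.1 := by
  induction h with
  | nil q => exact VA.Path.nil _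
  | cons ht hp ih => exact VA.Path.cons ht.1 ih

lemma interVA_sound {A1 : VA α V Q1} {A2 : VA α V Q2} {N : ℕ} :
    ∀ {s t : Q1 × Q2 × Sym (Option (Q2 × Q2)) N} {w : List (Label α V)},
      (interVA A1 A2 N).Path s w t → t ∈ (interVA A1 A2 N).final →
      ∀ R, Inv A2 R (toM s.2.2) →
        ∃ w2 qf, BlockRel R w w2 ∧ A2.Path s.2.1 w2 qf ∧ qf ∈ A2.final := by
  intro s t w hpath
  induction hpath with
  | nil q =>
    intro hfin R hinv
    obtain ⟨h1, q', hend, hq'⟩ := hfin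
    rcases hend with ⟨hC0, rfl⟩ | hC1
    · rw [hC0] at hinv
      obtain rfl : R = 0 := inv_C_zero hinv
      exact ⟨[], q.2.1, BlockRel.base 0 [] (by simp) rfl, VA.Path.nil _, hq'⟩
    · rw [hC1] at hinv
      rcases inv_extract hinv rfl with ⟨u, R', hne, hm, hp, rfl, hinv'⟩
      obtain rfl : R' = 0 := inv_C_zero hinv'
      exact ⟨u, q', BlockRel.base _ u hm (by rw [add_zero]), hp, hq'⟩
  | @cons q q' q'' l w ht hp ih =>
    intro hfin R hinv
    cases l with
    | letter a =>
      obtain ⟨ht1, ⟨qe, hend, ht2⟩, hC0⟩ := ht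
      have hinv0 : Inv A2 0 (toM q'.2.2) := by rw [hC0]; exact Inv.nil
      rcases ih hfin 0 hinv0 with ⟨w2', qf, hbr, hp2, hqf⟩
      rcases hend with ⟨hCz, rfl⟩ | hC1
      · obtain rfl : R = 0 := inv_C_zero (by rwa [hCz] at hinv)
        refine ⟨[] ++ (Label.letter a :: w2'), qf,
          BlockRel.letter a [] (by simp) rfl hbr, ?_, hqf⟩
        rw [List.nil_append]
        exact VA.Path.cons ht2 hp2
      · rw [hC1] at hinv
        rcases inv_extract hinv rfl with ⟨u, R', hne, hm, hpu, rfl, hinv'⟩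
        obtain rfl : R' = 0 := inv_C_zero hinv'
        refine ⟨u ++ (Label.letter a :: w2'), qf,
          BlockRel.letter a u hm (by rw [add_zero]) hbr, ?_, hqf⟩
        exact path_append hpu (VA.Path.cons ht2 hp2)
    | vopen x =>
      obtain ⟨ht1, heq, p, p', ht2, hstep⟩ := ht
      have hinv' : Inv A2 (Label.vopen x ::ₘ R) (toM q'.2.2) :=
        inv_step ht2 trivial hstep hinv
      rcases ih hfin _ hinv' with ⟨w2, qf, hbr, hp2, hqf⟩
      rw [heq] at hp2
      exact ⟨w2, qf, BlockRel.mark _ trivial hbr, hp2, hqf⟩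
    | vclose x =>
      obtain ⟨ht1, heq, p, p', ht2, hstep⟩ := ht
      have hinv' : Inv A2 (Label.vclose x ::ₘ R) (toM q'.2.2) :=
        inv_step ht2 trivial hstep hinv
      rcases ih hfin _ hinv' with ⟨w2, qf, hbr, hp2, hqf⟩
      rw [heq] at hp2
      exact ⟨w2, qf, BlockRel.mark _ trivial hbr, hp2, hqf⟩

lemma interVA_lift {A1 : VA α V Q1} {A2 : VA α V Q2} {N : ℕ} :
    ∀ {m : List (Label α V)} {C C' : Multiset (Q2 × Q2)}, ReadRun A2 N C m C' →
      (∀ l ∈ m, IsM l) → ∀ {q1 f1 : Q1}, A1.Path q1 m f1 → ∀ (q2 : Q2)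
      (s : Sym (Option (Q2 × Q2)) N), toM s = C →
      ∃ s' : Sym (Option (Q2 × Q2)) N, toM s' = C' ∧
        (interVA A1 A2 N).Path (q1, q2, s) m (f1, q2, s') := by
  intro m C C' hrr
  induction hrr with
  | nil C =>
    intro _ q1 f1 hp1 q2 s hs
    obtain rfl : q1 = f1 := path_nil_inv hp1
    exact ⟨s, hs, VA.Path.nil _⟩
  | @cons C C' C'' l w p p' ht hstep hcard h ih =>
    intro hmk q1 f1 hp1 q2 s hs
    rcases path_cons_inv hp1 with ⟨q1', ht1, hp1'⟩
    have hms : MStep (p, p') (toM s) (toM (ofM N C' hcard)) := by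
      rw [hs, toM_ofM]; exact hstep
    have htrans : (interVA A1 A2 N).trans (q1, q2, s) l (q1', q2, ofM N C' hcard) := by
      have hlm : IsM l := hmk l (by simp)
      cases l with
      | letter a => exact absurd hlm id
      | vopen x => exact ⟨ht1, rfl, p, p', ht, hms⟩
      | vclose x => exact ⟨ht1, rfl, p, p', ht, hms⟩
    rcases ih (fun x hx => hmk x (by simp [hx])) hp1' q2 (ofM N C' hcard) (toM_ofM N C' hcard) with
      ⟨s', hs', hpath⟩
    exact ⟨s', hs', VA.Path.cons htrans hpath⟩

lemma interVA_complete {A1 : VA α V Q1} {A2 : VA α V Q2} {N : ℕ} :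
    ∀ (n : ℕ) (w w2 : List (Label α V)), w.length ≤ n → BlockRel 0 w w2 →
      Bounded N w →
      ∀ (q1 f1 : Q1) (q2 qf : Q2), A1.Path q1 w f1 → f1 ∈ A1.final →
        A2.Path q2 w2 qf → qf ∈ A2.final →
        ∀ s : Sym (Option (Q2 × Q2)) N, toM s = 0 →
          ∃ t, (interVA A1 A2 N).Path (q1, q2, s) w t ∧ t ∈ (interVA A1 A2 N).final := by
  intro n
  induction n with
  | zero =>
    intro w w2 hlen hbr _ q1 f1 q2 qf hp1 hf1 hp2 hqf s hs
    obtain rfl : w = [] := List.length_eq_zero_iff.mp (by omega)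
    obtain rfl : q1 = f1 := path_nil_inv hp1
    rcases blockrel_cases hbr with ⟨_, _, hcoe⟩ | ⟨m, a, w', v, u', habs, _⟩
    · rw [Multiset.coe_nil, zero_add] at hcoe
      obtain rfl : w2 = [] := by simpa using hcoe.symm
      obtain rfl : q2 = qf := path_nil_inv hp2
      exact ⟨(q1, q2, s), VA.Path.nil _, hf1, q2, Or.inl ⟨hs, rfl⟩, hqf⟩
    · exact absurd habs (by simp)
  | succ n ih =>
    intro w w2 hlen hbr hbound q1 f1 q2 qf hp1 hf1 hp2 hqf s hs
    rcases blockrel_cases hbr with ⟨hw, hu, hcoe⟩ | ⟨m, a, w', v, u', rfl, rfl, hmk, hvk, hcoe, hbr'⟩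
    · rw [add_zero] at hcoe
      by_cases hwnil : w = []
      · subst hwnil
        obtain rfl : w2 = [] := by
          have := hcoe.symm
          rw [Multiset.coe_nil] at this
          simpa using this
        obtain rfl : q1 = f1 := path_nil_inv hp1
        obtain rfl : q2 = qf := path_nil_inv hp2
        exact ⟨(q1, q2, s), VA.Path.nil _, hf1, q2, Or.inl ⟨hs, rfl⟩, hqf⟩
      · have hw2ne : w2 ≠ [] := by
          intro h0
          subst h0
          rw [Multiset.coe_nil] at hcoe
          exact hwnil (by simpa using hcoe)
        have hinv : Inv A2 (w : Multiset (Label α V)) ((q2, qf) ::ₘ 0) := by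
          have h0 := Inv.cons hw2ne hu hp2 Inv.nil
          rwa [add_zero, ← hcoe] at h0
        have hlenN : w.length ≤ N := hbound [] w [] (by simp) hw
        have hrr := readrun_of_inv w _ hinv hlenN
        rcases interVA_lift hrr hw hp1 q2 s hs with ⟨s', hs', hpath⟩
        exact ⟨(f1, q2, s'), hpath, hf1, qf, Or.inr (by rw [hs']), hqf⟩
    · rw [add_zero] at hcoe
      rcases path_split hp1 with ⟨x1, hpm, hrest1⟩
      rcases path_cons_inv hrest1 with ⟨x1', hta1, hp1'⟩
      rcases path_split hp2 with ⟨y, hpv, hrest2⟩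
      rcases path_cons_inv hrest2 with ⟨y', hta2, hp2'⟩
      have hbound' : Bounded N w' := by
        refine bounded_suffix (x0 := m ++ [Label.letter a]) ?_
        rw [List.append_assoc, List.singleton_append]
        exact hbound
      have hlen' : w'.length ≤ n := by
        rw [List.length_append, List.length_cons] at hlen
        omega
      rcases ih w' u' hlen' hbr' hbound' x1' f1 y' qf hp1' hf1 hp2' hqf
        (ofM N 0 (by simp)) (toM_ofM N 0 (by simp)) with ⟨t, hpatht, hfint⟩
      by_cases hm0 : m = []
      · subst hm0
        obtain rfl : v = [] := by
          have := hcoe.symm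
          rw [Multiset.coe_nil] at this
          simpa using this
        obtain rfl : q1 = x1 := path_nil_inv hpm
        obtain rfl : q2 = y := path_nil_inv hpv
        have htrans : (interVA A1 A2 N).trans (q1, q2, s) (Label.letter a)
            (x1', y', ofM N 0 (by simp)) :=
          ⟨hta1, ⟨q2, Or.inl ⟨hs, rfl⟩, hta2⟩, toM_ofM N 0 (by simp)⟩
        exact ⟨t, by rw [List.nil_append]; exact VA.Path.cons htrans hpatht, hfint⟩
      · have hvne : v ≠ [] := by
          intro h0
          subst h0
          rw [Multiset.coe_nil] at hcoe
          exact hm0 (by simpa using hcoe)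
        have hinv : Inv A2 (m : Multiset (Label α V)) ((q2, y) ::ₘ 0) := by
          have h0 := Inv.cons hvne hvk hpv Inv.nil
          rwa [add_zero, ← hcoe] at h0
        have hlenm : m.length ≤ N := hbound [] m (Label.letter a :: w') rfl hmk
        have hrr := readrun_of_inv m _ hinv hlenm
        rcases interVA_lift hrr hmk hpm q2 s hs with ⟨s', hs', hpathm⟩
        have htrans : (interVA A1 A2 N).trans (x1, q2, s') (Label.letter a)
            (x1', y', ofM N 0 (by simp)) :=
          ⟨hta1, ⟨y, Or.inr (by rw [hs']), hta2⟩, toM_ofM N 0 (by simp)⟩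
        exact ⟨t, path_append hpathm (VA.Path.cons htrans hpatht), hfint⟩

end Inter4
/-- Regular spanners are closed under intersection. -/
theorem regular_closed_under_intersection {α V : Type} [Fintype α] [DecidableEq α]
    [DecidableEq V] (P1 P2 : Spanner α V) (h1 : IsRegular P1) (h2 : IsRegular P2) :
    IsRegular (fun d => P1 d ∩ P2 d) := by
  obtain ⟨Q1, hQ1, A1, hseq1, hsp1⟩ := h1
  obtain ⟨Q2, hQ2, A2, hseq2, hsp2⟩ := h2
  letI := hQ1
  letI := hQ2
  letI : DecidableEq (Option (Q2 × Q2)) := Classical.decEq _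
  refine ⟨Q1 × Q2 × Sym (Option (Q2 × Q2)) (Fintype.card Q1), inferInstance,
    interVA A1 A2 (Fintype.card Q1), ?_, ?_⟩
  · intro w hacc
    rcases hacc with ⟨t, ht, hpath⟩
    exact hseq1 w ⟨t.1, ht.1, interVA_path_proj hpath⟩
  · funext d
    ext mp
    simp only [VA.spanner, Set.mem_setOf_eq, Set.mem_inter_iff]
    constructor
    · rintro ⟨w, ⟨t, htf, hpath⟩, hlet, hrm⟩
      have hacc1 : A1.AcceptsRef w := ⟨t.1, htf.1, interVA_path_proj hpath⟩
      have hm1 : mp ∈ P1 d := by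
        rw [← hsp1]
        exact ⟨w, hacc1, hlet, hrm⟩
      have hinv0 : Inv A2 0 (toM ((interVA A1 A2 (Fintype.card Q1)).init).2.2) := by
        show Inv A2 0 (toM (ofM (Fintype.card Q1) 0 (by simp)))
        convert (Inv.nil : Inv A2 0 0)
        exact toM_ofM _ _ _
      rcases interVA_sound hpath htf 0 hinv0 with ⟨w2, qf, hbr, hp2, hqf⟩
      have hbridge := blockrel_bridge w.length w w2 le_rfl hbr
      have hlet2 : letters w = letters w2 := (blockrel_letters hbr).symm
      have hrm2 : refMapping w = refMapping w2 :=
        refMapping_congr hlet2 (fun l hl => (hbridge l hl).1) (fun l hl => (hbridge l hl).2)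
      have hm2 : mp ∈ P2 d := by
        rw [← hsp2]
        exact ⟨w2, ⟨qf, hqf, hp2⟩, by rw [← hlet2]; exact hlet, by rw [← hrm2]; exact hrm⟩
      exact ⟨hm1, hm2⟩
    · rintro ⟨hm1, hm2⟩
      rw [← hsp1] at hm1
      rw [← hsp2] at hm2
      rcases hm1 with ⟨w1, hacc1, hl1, hrm1⟩
      rcases hm2 with ⟨w2, hacc2, hl2, hrm2⟩
      have hv1 := hseq1 w1 hacc1
      have hv2 := hseq2 w2 hacc2
      have hbr := blockrel_of_data w1.length w1 w2 le_rfl (hl1.trans hl2.symm)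
        ((valid_bridge hv1 hv2 (hrm1.trans hrm2.symm)).1)
        ((valid_bridge hv1 hv2 (hrm1.trans hrm2.symm)).2)
        (valid_count_le_one hv1) (valid_count_le_one hv2)
      have hbound := bounded_of_accepted hseq1 hacc1
      rcases hacc1 with ⟨f1, hf1, hp1⟩
      rcases hacc2 with ⟨qf, hqf, hp2⟩
      rcases interVA_complete w1.length w1 w2 le_rfl hbr hbound A1.init f1 A2.init qf
        hp1 hf1 hp2 hqf (ofM _ 0 (by simp)) (toM_ofM _ 0 (by simp)) with ⟨t, hpath, htf⟩
      exact ⟨w1, ⟨t, htf, hpath⟩, hl1, hrm1⟩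

end DocSpanners
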